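/- The polynomial representation C[x] of the algebra H'' = ⟨D, x, s : sDs = -D, sxs = -x, [D,x] = 1+2ks, s² = 1⟩ (with D acting as the Dunkl operator, x as multiplication, s as reflection) is irreducible if and only if k ∉ -1/2 - Z≥0; when k = -1/2 - n for n ∈ Z≥0, the ideal generated by x^{2n+1} is a proper nontrivial submodule and the quotient C[x]/(x^{2n+1}) is an irreducible H''-module of dimension 2n+1. -/

import Mathlib

open Polynomial

/-- The reflection operator `s : f(x) ↦ f(-x)` on `ℂ[x]`. -/
noncomputable def sRefl : Polynomial ℂ → Polynomial ℂ :=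
  fun f => Polynomial.aeval (-Polynomial.X : Polynomial ℂ) f

/-- The Dunkl operator `D = d/dx - (k/x)(s-1)`: since `(s-1)f` has zero constant
term, `((s-1)f)/x` is the polynomial `divX (f(-x) - f(x))`. -/
noncomputable def dunkl (k : ℂ) (f : Polynomial ℂ) : Polynomial ℂ :=
  Polynomial.derivative f - Polynomial.C k * Polynomial.divX (sRefl f - f)

/-- `W` is invariant under the polynomial representation of `H''`, i.e. under the
Dunkl operator, multiplication by `x`, and the reflection `s`. -/
def IsHHSubmodule (k : ℂ) (W : Submodule ℂ (Polynomial ℂ)) : Prop :=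
  (∀ f ∈ W, dunkl k f ∈ W) ∧ (∀ f ∈ W, Polynomial.X * f ∈ W) ∧
  (∀ f ∈ W, sRefl f ∈ W)

/-- The ideal `(x^{2n+1})` of `ℂ[x]`, viewed as a `ℂ`-subspace. -/
noncomputable def xIdeal (n : ℕ) : Submodule ℂ (Polynomial ℂ) :=
  Submodule.restrictScalars ℂ (Ideal.span {Polynomial.X ^ (2*n+1)} : Ideal (Polynomial ℂ))

/-! ### Auxiliary lemmas -/

/-- The eigenvalue of the Dunkl operator on `x^m` (as coefficient multiplier). -/
noncomputable def cst (k : ℂ) (m : ℕ) : ℂ := (m : ℂ) - k * ((-1 : ℂ)^m - 1)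

lemma sRefl_coeff (f : Polynomial ℂ) (j : ℕ) :
    (sRefl f).coeff j = (-1 : ℂ)^j * f.coeff j := by
  induction f using Polynomial.induction_on' with
  | add p q hp hq =>
    simp only [sRefl, map_add, coeff_add] at *
    rw [hp, hq]; ring
  | monomial n a =>
    have : sRefl ((monomial n) a) = C ((-1:ℂ)^n * a) * X ^ n := by
      simp only [sRefl, aeval_monomial, algebraMap_eq]
      rw [neg_pow, ← C_1, ← C_neg, ← C_pow, ← mul_assoc, ← C_mul, mul_comm a]
    rw [this]
    simp only [coeff_C_mul, coeff_monomial, coeff_X_pow]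
    by_cases h : j = n <;> simp [h, Ne.symm]

lemma dunkl_coeff (k : ℂ) (f : Polynomial ℂ) (j : ℕ) :
    (dunkl k f).coeff j = cst k (j+1) * f.coeff (j+1) := by
  simp only [dunkl, coeff_sub, coeff_derivative, coeff_C_mul, coeff_divX, sRefl_coeff, cst]
  push_cast
  ring

lemma dunkl_step (k : ℂ) (f : Polynomial ℂ) (hf : f ≠ 0) (h1 : 1 ≤ f.natDegree)
    (hc : cst k f.natDegree ≠ 0) :
    dunkl k f ≠ 0 ∧ (dunkl k f).natDegree = f.natDegree - 1 := by
  set m := f.natDegree with hm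
  have hm1 : m - 1 + 1 = m := by omega
  have hlead : (dunkl k f).coeff (m-1) = cst k m * f.coeff m := by
    rw [dunkl_coeff, hm1]
  have hne : (dunkl k f).coeff (m-1) ≠ 0 := by
    rw [hlead]
    exact mul_ne_zero hc (by rw [hm]; exact Polynomial.leadingCoeff_ne_zero.mpr hf)
  have hd0 : dunkl k f ≠ 0 := fun h => hne (by simp [h])
  have hle : (dunkl k f).natDegree ≤ m - 1 := by
    apply Polynomial.natDegree_le_iff_coeff_eq_zero.mpr
    intro j hj
    rw [dunkl_coeff]
    have : f.coeff (j+1) = 0 := coeff_eq_zero_of_natDegree_lt (by omega)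
    simp [this]
  exact ⟨hd0, le_antisymm hle (le_natDegree_of_ne_zero hne)⟩

lemma reach_const (k : ℂ) : ∀ (m : ℕ) (f : Polynomial ℂ), f ≠ 0 → f.natDegree = m →
    (∀ i, 1 ≤ i → i ≤ m → cst k i ≠ 0) →
    ∃ c : ℂ, c ≠ 0 ∧ (dunkl k)^[m] f = Polynomial.C c := by
  intro m
  induction m with
  | zero =>
    intro f hf h0 _
    refine ⟨f.coeff 0, ?_, ?_⟩
    · intro h
      exact hf (by rw [Polynomial.eq_C_of_natDegree_eq_zero h0, h, map_zero])
    · simpa using (Polynomial.eq_C_of_natDegree_eq_zero h0)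
  | succ m ih =>
    intro f hf hd hc
    obtain ⟨h1, h2⟩ := dunkl_step k f hf (by omega) (by rw [hd]; exact hc (m+1) (by omega) le_rfl)
    rw [Function.iterate_succ_apply]
    exact ih (dunkl k f) h1 (by rw [h2, hd]; omega) (fun i hi1 hi2 => hc i hi1 (by omega))

lemma iter_mem {k : ℂ} {W : Submodule ℂ (Polynomial ℂ)} (hW : IsHHSubmodule k W) :
    ∀ (m : ℕ) {f : Polynomial ℂ}, f ∈ W → (dunkl k)^[m] f ∈ W := by
  intro m
  induction m with
  | zero => intro f hf; simpa using hf
  | succ m ih =>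
    intro f hf
    rw [Function.iterate_succ_apply]
    exact ih (hW.1 f hf)

lemma top_of_const {k : ℂ} {W : Submodule ℂ (Polynomial ℂ)}
    (hW : IsHHSubmodule k W) {c : ℂ} (hc : c ≠ 0) (hmem : Polynomial.C c ∈ W) : W = ⊤ := by
  have h1 : (1 : Polynomial ℂ) ∈ W := by
    have := W.smul_mem c⁻¹ hmem
    rwa [Polynomial.smul_C, smul_eq_mul, inv_mul_cancel₀ hc, Polynomial.C_1] at this
  have hX : ∀ j : ℕ, (Polynomial.X : Polynomial ℂ)^j ∈ W := by
    intro j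
    induction j with
    | zero => simpa using h1
    | succ j ih =>
      rw [pow_succ, mul_comm]
      exact hW.2.1 _ ih
  have hall : ∀ p : Polynomial ℂ, p ∈ W := by
    intro p
    induction p using Polynomial.induction_on' with
    | add p q hp hq => exact W.add_mem hp hq
    | monomial n a =>
      rw [← Polynomial.C_mul_X_pow_eq_monomial, ← Polynomial.smul_eq_C_mul]
      exact W.smul_mem a (hX n)
  exact eq_top_iff.mpr fun p _ => hall p

lemma cst_eq_even (k : ℂ) (i : ℕ) (h : Even i) : cst k i = i := by
  rw [cst, h.neg_one_pow]; ring

lemma cst_eq_odd (k : ℂ) (i : ℕ) (h : Odd i) : cst k i = i + 2*k := by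
  rw [cst, h.neg_one_pow]; ring

lemma cst_ne_zero (k : ℂ) (hk : ∀ n : ℕ, k ≠ -(1/2 : ℂ) - (n:ℂ)) (i : ℕ) (hi : 1 ≤ i) :
    cst k i ≠ 0 := by
  rcases Nat.even_or_odd i with he | ho
  · rw [cst_eq_even k i he]
    exact_mod_cast Nat.cast_ne_zero.mpr (by omega : i ≠ 0)
  · rw [cst_eq_odd k i ho]
    obtain ⟨n, hn⟩ := ho
    intro h
    apply hk n
    have hi' : (i : ℂ) = 2*(n:ℂ)+1 := by exact_mod_cast congrArg (Nat.cast : ℕ → ℂ) hn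
    rw [hi'] at h
    linear_combination h / 2

lemma cst_special (n : ℕ) : cst (-(1/2 : ℂ) - n) (2*n+1) = 0 := by
  rw [cst_eq_odd _ _ ⟨n, by omega⟩]
  push_cast
  ring

lemma cst_special_ne (n i : ℕ) (hi1 : 1 ≤ i) (hi2 : i ≤ 2*n) :
    cst (-(1/2 : ℂ) - n) i ≠ 0 := by
  rcases Nat.even_or_odd i with he | ho
  · rw [cst_eq_even _ i he]
    exact_mod_cast Nat.cast_ne_zero.mpr (by omega : i ≠ 0)
  · obtain ⟨m, hm⟩ := ho
    rw [cst_eq_odd _ i ⟨m, by omega⟩]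
    intro h
    have hi' : (i : ℂ) = 2*(m:ℂ)+1 := by exact_mod_cast congrArg (Nat.cast : ℕ → ℂ) hm
    rw [hi'] at h
    have hmn : (m : ℂ) = (n : ℂ) := by linear_combination h / 2
    have : m = n := Nat.cast_injective hmn
    omega

lemma mem_xIdeal_iff (n : ℕ) (f : Polynomial ℂ) :
    f ∈ xIdeal n ↔ ∀ d < 2*n+1, f.coeff d = 0 := by
  rw [xIdeal, Submodule.restrictScalars_mem, Ideal.mem_span_singleton]
  exact Polynomial.X_pow_dvd_iff

lemma xIdeal_isHH (n : ℕ) : IsHHSubmodule (-(1/2 : ℂ) - n) (xIdeal n) := by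
  refine ⟨?_, ?_, ?_⟩
  · intro f hf
    rw [mem_xIdeal_iff] at hf ⊢
    intro d hd
    rw [dunkl_coeff]
    by_cases h : d + 1 = 2*n+1
    · rw [h, cst_special, zero_mul]
    · rw [hf (d+1) (by omega), mul_zero]
  · intro f hf
    rw [xIdeal, Submodule.restrictScalars_mem] at hf ⊢
    exact Ideal.mul_mem_left _ _ hf
  · intro f hf
    rw [mem_xIdeal_iff] at hf ⊢
    intro d hd
    rw [sRefl_coeff, hf d hd, mul_zero]

/-- The "truncation" map sending `f` to its first `p` coefficients. -/
noncomputable def truncMap (p : ℕ) : Polynomial ℂ →ₗ[ℂ] (Fin p → ℂ) :=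
  LinearMap.pi fun i => Polynomial.lcoeff ℂ (i : ℕ)

lemma truncMap_surj (p : ℕ) : Function.Surjective (truncMap p) := by
  intro v
  refine ⟨∑ i : Fin p, Polynomial.C (v i) * Polynomial.X^(i:ℕ), ?_⟩
  ext i
  simp only [truncMap, LinearMap.pi_apply, Polynomial.lcoeff_apply, Polynomial.finset_sum_coeff,
    Polynomial.coeff_C_mul, Polynomial.coeff_X_pow]
  rw [Finset.sum_eq_single i]
  · simp
  · intro j _ hj
    have : ¬ ((i:ℕ) = (j:ℕ)) := fun h => hj (Fin.ext h).symm
    simp [this]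
  · intro h
    exact absurd (Finset.mem_univ i) h

lemma ker_truncMap (n : ℕ) : LinearMap.ker (truncMap (2*n+1)) = xIdeal n := by
  ext f
  rw [LinearMap.mem_ker, mem_xIdeal_iff]
  constructor
  · intro h d hd
    have := congrFun h ⟨d, hd⟩
    simpa [truncMap] using this
  · intro h
    ext i
    simpa [truncMap] using h i i.2

lemma finrank_quot (n : ℕ) :
    Module.finrank ℂ (Polynomial ℂ ⧸ xIdeal n) = 2*n + 1 := by
  have e := LinearMap.quotKerEquivOfSurjective _ (truncMap_surj (2*n+1))
  rw [ker_truncMap] at e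
  rw [e.finrank_eq, Module.finrank_pi]
  simp

/-- The polynomial representation `ℂ[x]` of `H''` is irreducible iff
`k ∉ -1/2 - ℤ≥0`; for `k = -1/2 - n`, the ideal `(x^{2n+1})` is a proper nontrivial
submodule and the quotient `ℂ[x]/(x^{2n+1})` is an irreducible `H''`-module of
dimension `2n+1`. -/
theorem polynomial_rep_irreducible_iff (k : ℂ) :
    ((∀ W : Submodule ℂ (Polynomial ℂ), IsHHSubmodule k W → W = ⊥ ∨ W = ⊤) ↔
      ∀ n : ℕ, k ≠ -(1/2 : ℂ) - (n:ℂ)) ∧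
    (∀ n : ℕ, k = -(1/2 : ℂ) - (n:ℂ) →
      IsHHSubmodule k (xIdeal n) ∧ xIdeal n ≠ ⊥ ∧ xIdeal n ≠ ⊤ ∧
      (∀ U : Submodule ℂ (Polynomial ℂ),
        xIdeal n ≤ U → IsHHSubmodule k U → U = xIdeal n ∨ U = ⊤) ∧
      Module.finrank ℂ (Polynomial ℂ ⧸ xIdeal n) = 2*n + 1) := by
  have hbot : ∀ n : ℕ, xIdeal n ≠ ⊥ := by
    intro n h
    have hmem : (Polynomial.X : Polynomial ℂ)^(2*n+1) ∈ xIdeal n :=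
      Ideal.subset_span rfl
    rw [h, Submodule.mem_bot] at hmem
    exact pow_ne_zero _ Polynomial.X_ne_zero hmem
  have htop : ∀ n : ℕ, xIdeal n ≠ ⊤ := by
    intro n h
    have hmem : (1 : Polynomial ℂ) ∈ xIdeal n := h ▸ Submodule.mem_top
    rw [mem_xIdeal_iff] at hmem
    have := hmem 0 (by omega)
    simp at this
  have part2 : ∀ n : ℕ, k = -(1/2 : ℂ) - (n:ℂ) →
      IsHHSubmodule k (xIdeal n) ∧ xIdeal n ≠ ⊥ ∧ xIdeal n ≠ ⊤ ∧
      (∀ U : Submodule ℂ (Polynomial ℂ),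
        xIdeal n ≤ U → IsHHSubmodule k U → U = xIdeal n ∨ U = ⊤) ∧
      Module.finrank ℂ (Polynomial ℂ ⧸ xIdeal n) = 2*n + 1 := by
    intro n hk
    subst hk
    refine ⟨xIdeal_isHH n, hbot n, htop n, ?_, finrank_quot n⟩
    intro U hle hU
    by_cases hU' : ∀ f ∈ U, f ∈ xIdeal n
    · left
      exact le_antisymm hU' hle
    · right
      push_neg at hU'
      obtain ⟨f, hfU, hf⟩ := hU'
      set q : Polynomial ℂ := Polynomial.X ^ (2*n+1) with hq
      have hmq : q.Monic := Polynomial.monic_X_pow _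
      set g := f %ₘ q with hg
      have hgU : g ∈ U := by
        have hdiv : q * (f /ₘ q) ∈ xIdeal n := by
          rw [xIdeal, Submodule.restrictScalars_mem]
          exact Ideal.mul_mem_right _ _ (Ideal.subset_span rfl)
        have : g = f - q * (f /ₘ q) := by
          rw [hg, eq_sub_iff_add_eq, Polynomial.modByMonic_add_div f q]
        rw [this]
        exact U.sub_mem hfU (hle hdiv)
      have hg0 : g ≠ 0 := by
        intro h
        apply hf
        rw [xIdeal, Submodule.restrictScalars_mem, Ideal.mem_span_singleton]
        exact (Polynomial.modByMonic_eq_zero_iff_dvd hmq).mp h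
      have hgdeg : g.natDegree ≤ 2*n := by
        have := Polynomial.degree_modByMonic_lt f hmq
        rw [Polynomial.degree_X_pow] at this
        have h2 := Polynomial.natDegree_lt_iff_degree_lt hg0 |>.mpr (by exact_mod_cast this)
        omega
      obtain ⟨c, hc0, hcC⟩ := reach_const _ g.natDegree g hg0 rfl
        (fun i hi1 hi2 => cst_special_ne n i hi1 (by omega))
      exact top_of_const hU hc0 (hcC ▸ iter_mem hU g.natDegree hgU)
  refine ⟨⟨?_, ?_⟩, part2⟩
  · intro hirr n hk
    obtain ⟨hsub, hb, ht, -, -⟩ := part2 n hk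
    rcases hirr _ hsub with h | h
    · exact hb h
    · exact ht h
  · intro hk W hW
    by_cases hW0 : W = ⊥
    · exact Or.inl hW0
    right
    obtain ⟨f, hfW, hf0⟩ := Submodule.ne_bot_iff W |>.mp hW0
    obtain ⟨c, hc0, hcC⟩ := reach_const k f.natDegree f hf0 rfl
      (fun i hi _ => cst_ne_zero k hk i hi)
    exact top_of_const hW hc0 (hcC ▸ iter_mem hW f.natDegree hfW)
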